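/- Let (M, g, J) be an almost Hermitian 4-manifold whose Riemann curvature, viewed as a symmetric endomorphism R of Lambda^2 M, satisfies: the Ricci tensor is J-invariant and the component W^+_2 of the self-dual Weyl tensor vanishes. Then for every J-anti-invariant self-dual 2-form psi, R(psi) is again a J-anti-invariant self-dual 2-form plus an anti-self-dual 2-form whose inner product with Omega vanishes; more precisely, <R(psi), Omega> = 0. -/

import Mathlib

open RealInnerProductSpace

noncomputable section

/-- The oriented Euclidean 4-space (model of a tangent space of an almost Hermitian
4-manifold). -/
abbrev E : Type := EuclideanSpace ℝ (Fin 4)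

/-- The standard (oriented, orthonormal) basis of `E`. -/
def e (i : Fin 4) : E := EuclideanSpace.single i 1

/-- `φ : E → E → ℝ` is a 2-form: bilinear and alternating. -/
def IsTwoForm (φ : E → E → ℝ) : Prop :=
  (∀ x y z : E, φ (x + y) z = φ x z + φ y z) ∧
  (∀ (c : ℝ) (x y : E), φ (c • x) y = c * φ x y) ∧
  (∀ x y : E, φ x y = -φ y x)

/-- A 2-form is self-dual iff `φ₁₂ = φ₃₄`, `φ₁₃ = φ₄₂`, `φ₁₄ = φ₂₃`. -/
def SelfDual (φ : E → E → ℝ) : Prop :=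
  φ (e 0) (e 1) = φ (e 2) (e 3) ∧ φ (e 0) (e 2) = φ (e 3) (e 1) ∧
    φ (e 0) (e 3) = φ (e 1) (e 2)

/-- A 2-form is anti-self-dual iff `φ₁₂ = -φ₃₄`, `φ₁₃ = -φ₄₂`, `φ₁₄ = -φ₂₃`. -/
def AntiSelfDual (φ : E → E → ℝ) : Prop :=
  φ (e 0) (e 1) = -φ (e 2) (e 3) ∧ φ (e 0) (e 2) = -φ (e 3) (e 1) ∧
    φ (e 0) (e 3) = -φ (e 1) (e 2)

/-- The inner product on 2-forms, normalized so that `|Ω|² = 2`. -/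
def formInner (φ ψ : E → E → ℝ) : ℝ :=
  (1 / 2) * ∑ i : Fin 4, ∑ j : Fin 4, φ (e i) (e j) * ψ (e i) (e j)

/-- The action of the curvature operator (encoded by its 4-tensor) on a 2-form:
`(Rψ)(x,y) = (1/2) Σ_{i,j} R(x,y,eᵢ,eⱼ) ψ(eᵢ,eⱼ)`. -/
def RF (R : E →ₗ[ℝ] E →ₗ[ℝ] E →ₗ[ℝ] E →ₗ[ℝ] ℝ) (ψ : E → E → ℝ) : E → E → ℝ :=
  fun x y => (1 / 2) * ∑ i : Fin 4, ∑ j : Fin 4, R x y (e i) (e j) * ψ (e i) (e j)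

/-- The fundamental form `Ω(x,y) = ⟨Jx, y⟩`. -/
def Omg (J : E →ₗ[ℝ] E) : E → E → ℝ := fun x y => ⟪J x, y⟫

lemma inner_e (x : E) (j : Fin 4) : ⟪x, e j⟫ = x j := by
  simp [e, PiLp.inner_apply, EuclideanSpace.single_apply]

lemma inner_expand (x y : E) : ⟪x, y⟫ = ∑ k : Fin 4, x k * y k := by
  simp [PiLp.inner_apply]
  exact Finset.sum_congr rfl fun _ _ => mul_comm _ _

lemma vec_expand (x : E) : x = ∑ j : Fin 4, x j • e j := by
  ext k
  rw [WithLp.ofLp_sum, Finset.sum_apply]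
  simp [e, EuclideanSpace.single_apply, PiLp.smul_apply]

namespace TF
variable {φ : E → E → ℝ}

lemma radd (h : IsTwoForm φ) (x y z : E) : φ x (y + z) = φ x y + φ x z := by
  rw [h.2.2 x (y+z), h.1, h.2.2 y x, h.2.2 z x]; ring

lemma rsmul (h : IsTwoForm φ) (c : ℝ) (x y : E) : φ x (c • y) = c * φ x y := by
  rw [h.2.2 x (c • y), h.2.1, h.2.2 y x]; ring

lemma negneg (h : IsTwoForm φ) (x y : E) : φ (-x) (-y) = φ x y := by
  have h1 : φ (-x) (-y) = (-1 : ℝ) * φ x (-y) := by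
    rw [← h.2.1 (-1) x (-y), neg_one_smul]
  have h2 : φ x (-y) = (-1 : ℝ) * φ x y := by
    rw [← rsmul h (-1) x y, neg_one_smul]
  rw [h1, h2]; ring

def leftMap (h : IsTwoForm φ) (y : E) : E →ₗ[ℝ] ℝ where
  toFun x := φ x y
  map_add' a b := h.1 a b y
  map_smul' c x := h.2.1 c x y

lemma expand (h : IsTwoForm φ) (x y : E) :
    φ x y = ∑ i : Fin 4, ∑ j : Fin 4, x i * y j * φ (e i) (e j) := by
  conv_lhs => rw [vec_expand x]
  have h1 : φ (∑ i : Fin 4, x i • e i) y = ∑ i : Fin 4, x i * φ (e i) y := by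
    have := map_sum (leftMap h y) (fun i => x i • e i) Finset.univ
    simpa only [map_smul, smul_eq_mul, leftMap, LinearMap.coe_mk, AddHom.coe_mk] using this
  rw [h1]
  refine Finset.sum_congr rfl fun i _ => ?_
  have hz : φ (e i) 0 = 0 := by
    have := rsmul h (0:ℝ) (e i) 0; simpa using this
  have h2 : φ (e i) (∑ j : Fin 4, y j • e j) = ∑ j : Fin 4, y j * φ (e i) (e j) := by
    induction (Finset.univ : Finset (Fin 4)) using Finset.induction with
    | empty => simpa using hz
    | insert _ _ hnot ih =>
        rw [Finset.sum_insert hnot, Finset.sum_insert hnot, radd h, rsmul h, ih]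
  conv_lhs => rw [vec_expand y]
  rw [h2, Finset.mul_sum]
  refine Finset.sum_congr rfl fun j _ => by ring
end TF

lemma formInner_RF (R : E →ₗ[ℝ] E →ₗ[ℝ] E →ₗ[ℝ] E →ₗ[ℝ] ℝ) (φ χ : E → E → ℝ) :
    formInner (RF R φ) χ = (1/4) * ∑ p : Fin 4 × Fin 4, ∑ q : Fin 4 × Fin 4,
      R (e p.1) (e p.2) (e q.1) (e q.2) * φ (e q.1) (e q.2) * χ (e p.1) (e p.2) := by
  simp only [formInner, RF, Fintype.sum_prod_type, Finset.sum_mul, Finset.mul_sum]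
  exact Finset.sum_congr rfl fun i _ => Finset.sum_congr rfl fun j _ =>
    Finset.sum_congr rfl fun k _ => Finset.sum_congr rfl fun l _ => by ring

lemma formInner_RF_symm (R : E →ₗ[ℝ] E →ₗ[ℝ] E →ₗ[ℝ] E →ₗ[ℝ] ℝ)
    (hRs : ∀ X Y Z W : E, R X Y Z W = R Z W X Y) (φ χ : E → E → ℝ) :
    formInner (RF R φ) χ = formInner (RF R χ) φ := by
  rw [formInner_RF, formInner_RF, Finset.sum_comm]
  refine congrArg _ (Finset.sum_congr rfl fun p _ => Finset.sum_congr rfl fun q _ => ?_)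
  rw [hRs]; ring

lemma sq3_zero {x y z : ℝ} (h : x^2 + y^2 + z^2 = 0) : x = 0 ∧ y = 0 ∧ z = 0 := by
  have hx : x^2 = 0 := by linarith [sq_nonneg x, sq_nonneg y, sq_nonneg z]
  have hy : y^2 = 0 := by linarith [sq_nonneg x, sq_nonneg y, sq_nonneg z]
  have hz : z^2 = 0 := by linarith [sq_nonneg x, sq_nonneg y, sq_nonneg z]
  exact ⟨(pow_eq_zero_iff two_ne_zero).mp hx, (pow_eq_zero_iff two_ne_zero).mp hy,
    (pow_eq_zero_iff two_ne_zero).mp hz⟩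

set_option maxHeartbeats 2000000 in

/-- Pointwise (algebraic) form of Lemma 1's setting: if the curvature tensor `R` of
an almost Hermitian 4-manifold has `J`-invariant Ricci tensor and `W⁺₂ = 0` (i.e.
`R(Ω)` pairs to zero with every `J`-anti-invariant self-dual 2-form), then for every
`J`-anti-invariant self-dual 2-form `ψ`, `R(ψ)` is a `J`-anti-invariant self-dual
2-form plus an anti-self-dual 2-form whose inner product with `Ω` vanishes; more
precisely `⟨R(ψ), Ω⟩ = 0`. -/
theorem stmt_15 (J : E →ₗ[ℝ] E) (hJ2 : ∀ x, J (J x) = -x)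
    (hJo : ∀ x y : E, ⟪J x, J y⟫ = ⟪x, y⟫)
    (horient : 0 < ⟪J (e 0), e 1⟫ * ⟪J (e 2), e 3⟫ - ⟪J (e 0), e 2⟫ * ⟪J (e 1), e 3⟫
      + ⟪J (e 0), e 3⟫ * ⟪J (e 1), e 2⟫)
    (R : E →ₗ[ℝ] E →ₗ[ℝ] E →ₗ[ℝ] E →ₗ[ℝ] ℝ)
    (hR1 : ∀ X Y Z W, R X Y Z W = -R Y X Z W)
    (hR2 : ∀ X Y Z W, R X Y Z W = -R X Y W Z)
    (hRs : ∀ X Y Z W, R X Y Z W = R Z W X Y)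
    (hBianchi : ∀ X Y Z W, R X Y Z W + R Y Z X W + R Z X Y W = 0)
    -- the Ricci tensor is J-invariant
    (hRic : ∀ X Y : E, (∑ i : Fin 4, R (e i) (J X) (J Y) (e i))
      = ∑ i : Fin 4, R (e i) X Y (e i))
    -- W⁺₂ = 0
    (hW2 : ∀ ψ : E → E → ℝ, IsTwoForm ψ → SelfDual ψ →
      (∀ x y, ψ (J x) (J y) = -ψ x y) → formInner (RF R (Omg J)) ψ = 0) :
    ∀ ψ : E → E → ℝ, IsTwoForm ψ → SelfDual ψ →
      (∀ x y, ψ (J x) (J y) = -ψ x y) →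
      formInner (RF R ψ) (Omg J) = 0 ∧
      ∃ α β : E → E → ℝ,
        (IsTwoForm α ∧ SelfDual α ∧ ∀ x y, α (J x) (J y) = -α x y) ∧
        (IsTwoForm β ∧ AntiSelfDual β ∧ formInner β (Omg J) = 0) ∧
        ∀ x y, RF R ψ x y = α x y + β x y := by
  intro ψ hψ hsd hai
  -- the two-form property of RF R ψ
  have hφ2 : IsTwoForm (RF R ψ) := by
    refine ⟨?_, ?_, ?_⟩
    · intro x y z
      simp only [RF, map_add, LinearMap.add_apply, add_mul, Finset.sum_add_distrib, mul_add]
    · intro t x y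
      simp only [RF, map_smul, LinearMap.smul_apply, smul_eq_mul, mul_assoc, ← Finset.mul_sum]
      ring
    · intro x y
      have hpt : ∀ i j : Fin 4, R x y (e i) (e j) * ψ (e i) (e j)
          = -(R y x (e i) (e j) * ψ (e i) (e j)) := fun i j => by rw [hR1 x y]; ring
      simp only [RF, hpt, Finset.sum_neg_distrib, mul_neg]
  -- part 1
  have part1 : formInner (RF R ψ) (Omg J) = 0 := by
    rw [formInner_RF_symm R hRs]; exact hW2 ψ hψ hsd hai
  refine ⟨part1, ?_⟩
  -- skew-symmetry of J
  have hskew : ∀ x y : E, ⟪J x, y⟫ = -⟪x, J y⟫ := by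
    intro x y
    have h := hJo x (J y)
    rw [hJ2] at h
    rw [inner_neg_right] at h
    linarith
  have hsk : ∀ i j : Fin 4, ⟪J (e i), e j⟫ = -⟪J (e j), e i⟫ := by
    intro i j; rw [hskew, real_inner_comm]
  have hco : ∀ i j : Fin 4, (J (e i)) j = ⟪J (e i), e j⟫ := fun i j => (inner_e _ j).symm
  set a := (⟪J (e 0), e 1⟫ : ℝ) with ha
  set b := (⟪J (e 0), e 2⟫ : ℝ) with hb
  set c := (⟪J (e 0), e 3⟫ : ℝ) with hc
  set d := (⟪J (e 1), e 2⟫ : ℝ) with hd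
  set f := (⟪J (e 1), e 3⟫ : ℝ) with hf
  set g := (⟪J (e 2), e 3⟫ : ℝ) with hg
  have c00 : (J (e 0)) 0 = 0 := by rw [hco]; have := hsk 0 0; linarith
  have c11 : (J (e 1)) 1 = 0 := by rw [hco]; have := hsk 1 1; linarith
  have c22 : (J (e 2)) 2 = 0 := by rw [hco]; have := hsk 2 2; linarith
  have c33 : (J (e 3)) 3 = 0 := by rw [hco]; have := hsk 3 3; linarith
  have c01 : (J (e 0)) 1 = a := by rw [hco, ← ha]
  have c02 : (J (e 0)) 2 = b := by rw [hco, ← hb]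
  have c03 : (J (e 0)) 3 = c := by rw [hco, ← hc]
  have c12 : (J (e 1)) 2 = d := by rw [hco, ← hd]
  have c13 : (J (e 1)) 3 = f := by rw [hco, ← hf]
  have c23 : (J (e 2)) 3 = g := by rw [hco, ← hg]
  have c10 : (J (e 1)) 0 = -a := by rw [hco, hsk 1 0, ← ha]
  have c20 : (J (e 2)) 0 = -b := by rw [hco, hsk 2 0, ← hb]
  have c30 : (J (e 3)) 0 = -c := by rw [hco, hsk 3 0, ← hc]
  have c21 : (J (e 2)) 1 = -d := by rw [hco, hsk 2 1, ← hd]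
  have c31 : (J (e 3)) 1 = -f := by rw [hco, hsk 3 1, ← hf]
  have c32 : (J (e 3)) 2 = -g := by rw [hco, hsk 3 2, ← hg]
  have hee : ∀ i j : Fin 4, (⟪e i, e j⟫ : ℝ) = if i = j then 1 else 0 := by
    intro i j; rw [inner_e]; simp [e, EuclideanSpace.single_apply, eq_comm]
  -- orthogonality relations
  have horth : ∀ i j : Fin 4,
      (J (e i)) 0 * (J (e j)) 0 + (J (e i)) 1 * (J (e j)) 1 + (J (e i)) 2 * (J (e j)) 2
        + (J (e i)) 3 * (J (e j)) 3 = if i = j then 1 else 0 := by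
    intro i j
    have h := hJo (e i) (e j)
    rw [inner_expand, Fin.sum_univ_four, hee] at h
    linarith
  have h00 : a^2 + b^2 + c^2 = 1 := by
    have h := horth 0 0; rw [c00, c01, c02, c03] at h; simp at h; linear_combination h
  have h11 : a^2 + d^2 + f^2 = 1 := by
    have h := horth 1 1; rw [c10, c11, c12, c13] at h; simp at h; linear_combination h
  have h22 : b^2 + d^2 + g^2 = 1 := by
    have h := horth 2 2; rw [c20, c21, c22, c23] at h; simp at h; linear_combination h
  have h33 : c^2 + f^2 + g^2 = 1 := by
    have h := horth 3 3; rw [c30, c31, c32, c33] at h; simp at h; linear_combination h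
  have h01 : b*d + c*f = 0 := by
    have h := horth 0 1; rw [c00, c01, c02, c03, c10, c11, c12, c13] at h
    simp at h; linear_combination h
  have h02 : a*d - c*g = 0 := by
    have h := horth 0 2; rw [c00, c01, c02, c03, c20, c21, c22, c23] at h
    simp at h; linear_combination -h
  have h03 : a*f + b*g = 0 := by
    have h := horth 0 3; rw [c00, c01, c02, c03, c30, c31, c32, c33] at h
    simp at h; linear_combination -h
  have hS2 : d^2 + f^2 + g^2 = 1 := by linear_combination (h11 + h22 + h33 - h00)/2
  have hP2 : (a*g - b*f + c*d)^2 = 1 := by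
    linear_combination (d^2+f^2+g^2)*h00 + hS2 - (b*d+c*f)*h01 - (a*d-c*g)*h02 - (a*f+b*g)*h03
  have hP1 : a*g - b*f + c*d = 1 := by
    have h' : (a*g - b*f + c*d - 1) * (a*g - b*f + c*d + 1) = 0 := by linear_combination hP2
    rcases mul_eq_zero.mp h' with h'' | h''
    · linarith
    · linarith [horient]
  have hu : (a-g)^2 + (b+f)^2 + (c-d)^2 = 0 := by linear_combination h00 + hS2 - 2*hP1
  obtain ⟨hu1, hu2, hu3⟩ := sq3_zero hu
  have hga : g = a := by linarith
  have hfb : f = -b := by linarith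
  have hdc : d = c := by linarith
  rw [hdc] at c12 c21
  rw [hfb] at c13 c31
  rw [hga] at c23 c32
  rw [neg_neg] at c31
  -- skew facts for RF R ψ
  have p10 : RF R ψ (e 1) (e 0) = -RF R ψ (e 0) (e 1) := hφ2.2.2 _ _
  have p20 : RF R ψ (e 2) (e 0) = -RF R ψ (e 0) (e 2) := hφ2.2.2 _ _
  have p30 : RF R ψ (e 3) (e 0) = -RF R ψ (e 0) (e 3) := hφ2.2.2 _ _
  have p21 : RF R ψ (e 2) (e 1) = -RF R ψ (e 1) (e 2) := hφ2.2.2 _ _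
  have p31 : RF R ψ (e 3) (e 1) = -RF R ψ (e 1) (e 3) := hφ2.2.2 _ _
  have p32 : RF R ψ (e 3) (e 2) = -RF R ψ (e 2) (e 3) := hφ2.2.2 _ _
  have p00 : RF R ψ (e 0) (e 0) = 0 := by have := hφ2.2.2 (e 0) (e 0); linarith
  have p11 : RF R ψ (e 1) (e 1) = 0 := by have := hφ2.2.2 (e 1) (e 1); linarith
  have p22 : RF R ψ (e 2) (e 2) = 0 := by have := hφ2.2.2 (e 2) (e 2); linarith
  have p33 : RF R ψ (e 3) (e 3) = 0 := by have := hφ2.2.2 (e 3) (e 3); linarith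
  -- the component form of part1
  have hH : a*(RF R ψ (e 0) (e 1) + RF R ψ (e 2) (e 3))
      + b*(RF R ψ (e 0) (e 2) - RF R ψ (e 1) (e 3))
      + c*(RF R ψ (e 0) (e 3) + RF R ψ (e 1) (e 2)) = 0 := by
    have h := part1
    simp only [formInner, Omg, Fin.sum_univ_four, inner_e] at h
    rw [c00, c01, c02, c03, c10, c11, c12, c13, c20, c21, c22, c23, c30, c31, c32, c33] at h
    rw [p10, p20, p30, p21, p31, p32, p00, p11, p22, p33] at h
    linear_combination h
  -- now construct α and β
  have hα2 : IsTwoForm (fun x y => (RF R ψ x y - RF R ψ (J x) (J y))/2) := by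
    refine ⟨?_, ?_, ?_⟩
    · intro x y z
      show (RF R ψ (x+y) z - RF R ψ (J (x+y)) (J z))/2 = _
      rw [map_add, hφ2.1, hφ2.1]; ring
    · intro t x y
      show (RF R ψ (t • x) y - RF R ψ (J (t • x)) (J y))/2 = _
      rw [map_smul, hφ2.2.1, hφ2.2.1]; ring
    · intro x y
      show (RF R ψ x y - RF R ψ (J x) (J y))/2 = _
      rw [hφ2.2.2 x y, hφ2.2.2 (J x) (J y)]; ring
  have hβ2 : IsTwoForm (fun x y => (RF R ψ x y + RF R ψ (J x) (J y))/2) := by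
    refine ⟨?_, ?_, ?_⟩
    · intro x y z
      show (RF R ψ (x+y) z + RF R ψ (J (x+y)) (J z))/2 = _
      rw [map_add, hφ2.1, hφ2.1]; ring
    · intro t x y
      show (RF R ψ (t • x) y + RF R ψ (J (t • x)) (J y))/2 = _
      rw [map_smul, hφ2.2.1, hφ2.2.1]; ring
    · intro x y
      show (RF R ψ x y + RF R ψ (J x) (J y))/2 = _
      rw [hφ2.2.2 x y, hφ2.2.2 (J x) (J y)]; ring
  have hαai : ∀ x y, (RF R ψ (J x) (J y) - RF R ψ (J (J x)) (J (J y)))/2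
      = -((RF R ψ x y - RF R ψ (J x) (J y))/2) := by
    intro x y
    rw [hJ2 x, hJ2 y, TF.negneg hφ2]; ring
  have hαSD : SelfDual (fun x y => (RF R ψ x y - RF R ψ (J x) (J y))/2) := by
    refine ⟨?_, ?_, ?_⟩
    · show (RF R ψ (e 0) (e 1) - RF R ψ (J (e 0)) (J (e 1)))/2
        = (RF R ψ (e 2) (e 3) - RF R ψ (J (e 2)) (J (e 3)))/2
      rw [TF.expand hφ2 (J (e 0)) (J (e 1)), TF.expand hφ2 (J (e 2)) (J (e 3))]
      simp only [Fin.sum_univ_four]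
      rw [c00, c01, c02, c03, c10, c11, c12, c13, c20, c21, c22, c23, c30, c31, c32, c33]
      rw [p10, p20, p30, p21, p31, p32, p00, p11, p22, p33]
      linear_combination ((RF R ψ (e 2) (e 3) - RF R ψ (e 0) (e 1))/2) * h00
    · show (RF R ψ (e 0) (e 2) - RF R ψ (J (e 0)) (J (e 2)))/2
        = (RF R ψ (e 3) (e 1) - RF R ψ (J (e 3)) (J (e 1)))/2
      rw [TF.expand hφ2 (J (e 0)) (J (e 2)), TF.expand hφ2 (J (e 3)) (J (e 1))]
      simp only [Fin.sum_univ_four]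
      rw [c00, c01, c02, c03, c10, c11, c12, c13, c20, c21, c22, c23, c30, c31, c32, c33]
      rw [p10, p20, p30, p21, p31, p32, p00, p11, p22, p33]
      linear_combination (-(RF R ψ (e 0) (e 2) + RF R ψ (e 1) (e 3))/2) * h00
    · show (RF R ψ (e 0) (e 3) - RF R ψ (J (e 0)) (J (e 3)))/2
        = (RF R ψ (e 1) (e 2) - RF R ψ (J (e 1)) (J (e 2)))/2
      rw [TF.expand hφ2 (J (e 0)) (J (e 3)), TF.expand hφ2 (J (e 1)) (J (e 2))]
      simp only [Fin.sum_univ_four]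
      rw [c00, c01, c02, c03, c10, c11, c12, c13, c20, c21, c22, c23, c30, c31, c32, c33]
      rw [p10, p20, p30, p21, p31, p32, p00, p11, p22, p33]
      linear_combination (-(RF R ψ (e 0) (e 3) - RF R ψ (e 1) (e 2))/2) * h00
  have hβASD : AntiSelfDual (fun x y => (RF R ψ x y + RF R ψ (J x) (J y))/2) := by
    refine ⟨?_, ?_, ?_⟩
    · show (RF R ψ (e 0) (e 1) + RF R ψ (J (e 0)) (J (e 1)))/2
        = -((RF R ψ (e 2) (e 3) + RF R ψ (J (e 2)) (J (e 3)))/2)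
      rw [TF.expand hφ2 (J (e 0)) (J (e 1)), TF.expand hφ2 (J (e 2)) (J (e 3))]
      simp only [Fin.sum_univ_four]
      rw [c00, c01, c02, c03, c10, c11, c12, c13, c20, c21, c22, c23, c30, c31, c32, c33]
      rw [p10, p20, p30, p21, p31, p32, p00, p11, p22, p33]
      linear_combination a * hH - ((RF R ψ (e 0) (e 1) + RF R ψ (e 2) (e 3))/2) * h00
    · show (RF R ψ (e 0) (e 2) + RF R ψ (J (e 0)) (J (e 2)))/2
        = -((RF R ψ (e 3) (e 1) + RF R ψ (J (e 3)) (J (e 1)))/2)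
      rw [TF.expand hφ2 (J (e 0)) (J (e 2)), TF.expand hφ2 (J (e 3)) (J (e 1))]
      simp only [Fin.sum_univ_four]
      rw [c00, c01, c02, c03, c10, c11, c12, c13, c20, c21, c22, c23, c30, c31, c32, c33]
      rw [p10, p20, p30, p21, p31, p32, p00, p11, p22, p33]
      linear_combination b * hH - ((RF R ψ (e 0) (e 2) - RF R ψ (e 1) (e 3))/2) * h00
    · show (RF R ψ (e 0) (e 3) + RF R ψ (J (e 0)) (J (e 3)))/2
        = -((RF R ψ (e 1) (e 2) + RF R ψ (J (e 1)) (J (e 2)))/2)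
      rw [TF.expand hφ2 (J (e 0)) (J (e 3)), TF.expand hφ2 (J (e 1)) (J (e 2))]
      simp only [Fin.sum_univ_four]
      rw [c00, c01, c02, c03, c10, c11, c12, c13, c20, c21, c22, c23, c30, c31, c32, c33]
      rw [p10, p20, p30, p21, p31, p32, p00, p11, p22, p33]
      linear_combination c * hH - ((RF R ψ (e 0) (e 3) + RF R ψ (e 1) (e 2))/2) * h00
  -- ⟨β, Ω⟩ = 0
  have hβΩ : formInner (fun x y => (RF R ψ x y + RF R ψ (J x) (J y))/2) (Omg J) = 0 := by
    have hb1 := hβASD.1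
    have hb2 := hβASD.2.1
    have hb3 := hβASD.2.2
    have q10 := hβ2.2.2 (e 1) (e 0)
    have q20 := hβ2.2.2 (e 2) (e 0)
    have q30 := hβ2.2.2 (e 3) (e 0)
    have q21 := hβ2.2.2 (e 2) (e 1)
    have q31 := hβ2.2.2 (e 3) (e 1)
    have q32 := hβ2.2.2 (e 3) (e 2)
    simp only [] at hb1 hb2 hb3 q10 q20 q30 q21 q31 q32
    rw [q31] at hb2
    rw [neg_neg] at hb2
    simp only [formInner, Omg, Fin.sum_univ_four, inner_e]
    rw [c00, c01, c02, c03, c10, c11, c12, c13, c20, c21, c22, c23, c30, c31, c32, c33]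
    rw [q10, q20, q30, q21, q31, q32]
    linear_combination a * hb1 + b * hb2 + c * hb3
  exact ⟨fun x y => (RF R ψ x y - RF R ψ (J x) (J y))/2,
    fun x y => (RF R ψ x y + RF R ψ (J x) (J y))/2,
    ⟨hα2, hαSD, hαai⟩, ⟨hβ2, hβASD, hβΩ⟩,
    fun x y => by
      show RF R ψ x y = (RF R ψ x y - RF R ψ (J x) (J y))/2
        + (RF R ψ x y + RF R ψ (J x) (J y))/2
      ring⟩


end
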